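/- (Uniform upper bound for the infima, real-valued cost case.) Assume Λ : [0,T] × ℝⁿ × ℝᵐ → [0,+∞) is finite valued and bounded on bounded sets (for every C > 0, sup{Λ(s,y,u) : s ∈ [0,T], |y| ≤ C, |u| ≤ C} < +∞), that 0 ∈ 𝒰, and that the cost g : 𝒮 → [0,+∞) is real valued and locally bounded. Then for every δ ∈ [0,T), δ* ≥ 0 and x* ∈ ℝⁿ there exists B ≥ 0 such that for every t ∈ [0,δ] and every x ∈ 𝒮 with |x − x*| ≤ δ* there is an admissible pair (y,u) for (P_{t,x}) with J_t(y,u) ≤ B. -/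
import Mathlib


open MeasureTheory Set Filter
open scoped ENNReal NNReal

noncomputable section

/-- Euclidean space `ℝ^k`. -/
abbrev Vec (k : ℕ) : Type := EuclideanSpace ℝ (Fin k)

/-- The control set is a nonempty cone. -/
def IsCone {k : ℕ} (U : Set (Vec k)) : Prop :=
  U.Nonempty ∧ ∀ u ∈ U, ∀ c : ℝ, 0 < c → c • u ∈ U

variable {n m : ℕ}

/-- The effective domain of the Lagrangian, inside `[0,T] × ℝⁿ × ℝᵐ`. -/
def domSet (T : ℝ) (L : ℝ → Vec n → Vec m → ℝ≥0∞) : Set (ℝ × Vec n × Vec m) :=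
  {p | p.1 ∈ Icc 0 T ∧ L p.1 p.2.1 p.2.2 ≠ ⊤}

/-- Boundary of the effective domain relative to `[0,T] × ℝⁿ × ℝᵐ`. -/
def bdryDom (T : ℝ) (L : ℝ → Vec n → Vec m → ℝ≥0∞) : Set (ℝ × Vec n × Vec m) :=
  closure (domSet T L) ∩
    closure ((Icc (0:ℝ) T ×ˢ (univ : Set (Vec n × Vec m))) \ domSet T L)

/-- Distance to the boundary of the effective domain. -/
def distBdry (T : ℝ) (L : ℝ → Vec n → Vec m → ℝ≥0∞) (p : ℝ × Vec n × Vec m) : ℝ :=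
  Metric.infDist p (bdryDom T L)

/-- The effective domain is strictly star-shaped in the control variable. -/
def StarShapedDom (T : ℝ) (L : ℝ → Vec n → Vec m → ℝ≥0∞) : Prop :=
  ∀ᵐ s ∂(volume : Measure ℝ), s ∈ Icc (0:ℝ) T → ∀ (y : Vec n) (u : Vec m),
    L s y u ≠ ⊤ → ∀ r : ℝ, 0 < r → r ≤ 1 → L s y (r • u) ≠ ⊤

/-- Linear growth from below: `L(s,y,u) ≥ α‖u‖ − d` for `u ∈ U`. -/
def LinearGrowth (T : ℝ) (L : ℝ → Vec n → Vec m → ℝ≥0∞) (U : Set (Vec m))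
    (α d : ℝ) : Prop :=
  ∀ᵐ s ∂(volume : Measure ℝ), s ∈ Icc (0:ℝ) T → ∀ y : Vec n, ∀ u ∈ U,
    ENNReal.ofReal (α * ‖u‖ - d) ≤ L s y u

/-- Condition (S), with explicit constants `κ, A, γ, ε`. -/
def ConditionSWith (T : ℝ) (L : ℝ → Vec n → Vec m → ℝ≥0∞) (U : Set (Vec m))
    (κ A : ℝ) (γ : ℝ → ℝ) (ε : ℝ) : Prop :=
  0 ≤ κ ∧ 0 ≤ A ∧ (∀ s, 0 ≤ γ s) ∧ IntegrableOn γ (Icc 0 T) ∧ 0 < ε ∧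
  ∀ᵐ s ∂(volume : Measure ℝ), s ∈ Icc (0:ℝ) T →
    ∀ s₁ ∈ Icc (s - ε) (s + ε) ∩ Icc (0:ℝ) T, ∀ s₂ ∈ Icc (s - ε) (s + ε) ∩ Icc (0:ℝ) T,
    ∀ y : Vec n, ∀ u ∈ U, L s₁ y u ≠ ⊤ → L s₂ y u ≠ ⊤ →
      ENNReal.ofReal |(L s₂ y u).toReal - (L s₁ y u).toReal| ≤
        (ENNReal.ofReal κ * L s y u + ENNReal.ofReal (A * ‖u‖ + γ s)) *
          ENNReal.ofReal |s₂ - s₁|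

/-- The constant `c_t(B) = (B + d(T−t))/(α(T−t))`. -/
def cLow (T α d B t : ℝ) : ℝ := (B + d * (T - t)) / (α * (T - t))

/-- The constant `Φ(B) = κB + (A/α)(B + dT) + ‖γ‖₁`. -/
def PhiB (T κ A : ℝ) (γ : ℝ → ℝ) (α d B : ℝ) : ℝ :=
  κ * B + A / α * (B + d * T) + ∫ s in Icc (0:ℝ) T, γ s

/-- Radial convexity in the control variable. -/
def RadiallyConvex (T : ℝ) (L : ℝ → Vec n → Vec m → ℝ≥0∞) (U : Set (Vec m)) : Prop :=
  ∀ᵐ s ∂(volume : Measure ℝ), s ∈ Icc (0:ℝ) T → ∀ y : Vec n, ∀ u ∈ U,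
    ∀ r₁ r₂ : ℝ, 0 < r₁ → 0 < r₂ → ∀ a c : ℝ, 0 ≤ a → 0 ≤ c → a + c = 1 →
      L s y ((a * r₁ + c * r₂) • u) ≤
        ENNReal.ofReal a * L s y (r₁ • u) + ENNReal.ofReal c * L s y (r₂ • u)

/-- A selection of the radial convex subdifferential `∂_r L(s,y,ru)` at `r = 1`. -/
def IsRadialSelection (T : ℝ) (L : ℝ → Vec n → Vec m → ℝ≥0∞) (U : Set (Vec m))
    (Q : ℝ → Vec n → Vec m → ℝ) : Prop :=
  ∀ s ∈ Icc (0:ℝ) T, ∀ y : Vec n, ∀ u ∈ U, L s y u ≠ ⊤ → ∀ r : ℝ, 0 < r →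
    ENNReal.ofReal ((L s y u).toReal + Q s y u * (r - 1)) ≤ L s y (r • u)

/-- `L` is bounded on the bounded sets that are well-inside its domain. -/
def BddWellInside (T : ℝ) (L : ℝ → Vec n → Vec m → ℝ≥0∞) : Prop :=
  ∀ C > (0:ℝ), ∀ ρ > (0:ℝ), ∃ M : ℝ,
    ∀ s ∈ Icc (0:ℝ) T, ∀ (y : Vec n) (u : Vec m), L s y u ≠ ⊤ →
      ‖y‖ + ‖u‖ ≤ C → ρ ≤ distBdry T L (s, y, u) → L s y u ≤ ENNReal.ofReal M

/-- Condition (H_B^δ), radial convex form. -/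
def ConditionH (T : ℝ) (L : ℝ → Vec n → Vec m → ℝ≥0∞) (U : Set (Vec m))
    (α d κ A : ℝ) (γ : ℝ → ℝ) (δ B : ℝ) : Prop :=
  ∀ K ≥ (0:ℝ), ∃ ν > (0:ℝ), ∃ c > cLow T α d B δ, ∃ Q : ℝ → Vec n → Vec m → ℝ,
    IsRadialSelection T L U Q ∧
    ∀ ρ > (0:ℝ), ∃ Sup Inf : ℝ,
      (∀ s ∈ Icc (0:ℝ) T, ∀ y : Vec n, ‖y‖ ≤ K → ∀ u ∈ U, ν ≤ ‖u‖ → L s y u ≠ ⊤ →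
        (L s y u).toReal - Q s y u ≤ Sup) ∧
      (∀ s ∈ Icc (0:ℝ) T, ∀ y : Vec n, ‖y‖ ≤ K → ∀ u ∈ U, ‖u‖ < c → L s y u ≠ ⊤ →
        ρ ≤ distBdry T L (s, y, u) → Inf ≤ (L s y u).toReal - Q s y u) ∧
      Sup + 2 * PhiB T κ A γ α d B < Inf

/-- Condition (M_B^δ), radial convex form. -/
def ConditionM (T : ℝ) (L : ℝ → Vec n → Vec m → ℝ≥0∞) (U : Set (Vec m))
    (α d : ℝ) (δ B : ℝ) : Prop :=
  ∀ K ≥ (0:ℝ), ∃ ν > (0:ℝ), ∃ c > cLow T α d B δ, ∃ Q : ℝ → Vec n → Vec m → ℝ,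
    IsRadialSelection T L U Q ∧
    ∀ ρ > (0:ℝ),
      (∃ Inf : ℝ, ∀ s ∈ Icc (0:ℝ) T, ∀ y : Vec n, ‖y‖ ≤ K → ∀ u ∈ U, ‖u‖ < c →
        L s y u ≠ ⊤ → ρ ≤ distBdry T L (s, y, u) → Inf ≤ (L s y u).toReal - Q s y u) ∧
      (∃ Sup : ℝ, ∀ s ∈ Icc (0:ℝ) T, ∀ y : Vec n, ‖y‖ ≤ K → ∀ u ∈ U, ν ≤ ‖u‖ →
        L s y u ≠ ⊤ → (L s y u).toReal - Q s y u ≤ Sup)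

/-- Hypothesis (h₁): the effective domain is a product `[0,T] × D`. -/
def Hyp1 (T : ℝ) (L : ℝ → Vec n → Vec m → ℝ≥0∞) : Prop :=
  ∃ D : Set (Vec n × Vec m), domSet T L = Icc (0:ℝ) T ×ˢ D

/-- Hypothesis (h₂): `L` tends uniformly to `+∞` at the boundary of its domain. -/
def Hyp2 (T : ℝ) (L : ℝ → Vec n → Vec m → ℝ≥0∞) (U : Set (Vec m)) : Prop :=
  ∀ M : ℝ, ∃ ρ > (0:ℝ), ∀ s ∈ Icc (0:ℝ) T, ∀ y : Vec n, ∀ u ∈ U, L s y u ≠ ⊤ →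
    distBdry T L (s, y, u) < ρ → ENNReal.ofReal M ≤ L s y u

/-- The Bolza functional `J_t(y,u)`. -/
def Jfun (T : ℝ) (L : ℝ → Vec n → Vec m → ℝ≥0∞) (g : Vec n → ℝ≥0∞)
    (t : ℝ) (y : ℝ → Vec n) (u : ℝ → Vec m) : ℝ≥0∞ :=
  (∫⁻ s in Icc t T, L s (y s) (u s)) + g (y T)

/-- An admissible pair for problem (P_{t,x}). -/
def Admissible (T : ℝ) (L : ℝ → Vec n → Vec m → ℝ≥0∞) (U : Set (Vec m))
    (b : Vec n → Vec m →L[ℝ] Vec n) (g : Vec n → ℝ≥0∞) (S : Set (Vec n))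
    (t : ℝ) (x : Vec n) (y : ℝ → Vec n) (u : ℝ → Vec m) : Prop :=
  Measurable u ∧ (∀ᵐ s ∂(volume : Measure ℝ), s ∈ Icc t T → u s ∈ U) ∧
  IntegrableOn (fun τ => b (y τ) (u τ)) (Icc t T) ∧
  (∀ s ∈ Icc t T, y s = x + ∫ τ in Icc t s, b (y τ) (u τ)) ∧
  (∀ s ∈ Icc t T, y s ∈ S) ∧
  Jfun T L g t y u ≠ ⊤

/-- The value `inf (P_{t,x})`. -/
def infP (T : ℝ) (L : ℝ → Vec n → Vec m → ℝ≥0∞) (U : Set (Vec m))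
    (b : Vec n → Vec m →L[ℝ] Vec n) (g : Vec n → ℝ≥0∞) (S : Set (Vec n))
    (t : ℝ) (x : Vec n) : ℝ≥0∞ :=
  sInf {v | ∃ y u, Admissible T L U b g S t x y u ∧ Jfun T L g t y u = v}

/-- A minimizing sequence for (P_{t,x}). -/
def MinimizingSeq (T : ℝ) (L : ℝ → Vec n → Vec m → ℝ≥0∞) (U : Set (Vec m))
    (b : Vec n → Vec m →L[ℝ] Vec n) (g : Vec n → ℝ≥0∞) (S : Set (Vec n))
    (t : ℝ) (x : Vec n) (y : ℕ → ℝ → Vec n) (u : ℕ → ℝ → Vec m) : Prop :=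
  (∀ j, Admissible T L U b g S t x (y j) (u j)) ∧
  Tendsto (fun j => Jfun T L g t (y j) (u j)) atTop (nhds (infP T L U b g S t x))

/-- uniform upper bound for the infima, real-valued cost case. -/
theorem stmt_12 (T : ℝ) (hT : 0 < T) (n m : ℕ)
    (L : ℝ → Vec n → Vec m → ℝ≥0∞)
    (hmeas : Measurable fun p : ℝ × Vec n × Vec m => L p.1 p.2.1 p.2.2)
    (hfin : ∀ s ∈ Icc (0:ℝ) T, ∀ (y : Vec n) (u : Vec m), L s y u ≠ ⊤)
    (hbdd : ∀ C > (0:ℝ), ∃ M : ℝ, ∀ s ∈ Icc (0:ℝ) T, ∀ (y : Vec n) (u : Vec m),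
      ‖y‖ ≤ C → ‖u‖ ≤ C → L s y u ≤ ENNReal.ofReal M)
    (U : Set (Vec m)) (hU : IsCone U) (h0U : (0 : Vec m) ∈ U)
    (b : Vec n → Vec m →L[ℝ] Vec n) (hbmeas : Measurable b)
    (θ : ℝ) (hθ : 0 ≤ θ) (hb : ∀ y, ‖b y‖ ≤ θ * (1 + ‖y‖))
    (S : Set (Vec n)) (hS : S.Nonempty)
    (g : Vec n → ℝ≥0∞) (hgfin : ∀ x ∈ S, g x ≠ ⊤)
    (hgloc : ∀ C > (0:ℝ), ∃ M : ℝ, ∀ x ∈ S, ‖x‖ ≤ C → g x ≤ ENNReal.ofReal M)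
    (δ δs : ℝ) (hδ0 : 0 ≤ δ) (hδT : δ < T) (hδs : 0 ≤ δs) (xs : Vec n) :
    ∃ B ≥ (0:ℝ), ∀ t ∈ Icc (0:ℝ) δ, ∀ x ∈ S, ‖x - xs‖ ≤ δs →
      ∃ (y : ℝ → Vec n) (u : ℝ → Vec m),
        Admissible T L U b g S t x y u ∧ Jfun T L g t y u ≤ ENNReal.ofReal B := by
  obtain ⟨M₁, hM₁⟩ := hbdd (‖xs‖ + δs + 1) (by positivity)
  obtain ⟨M₂, hM₂⟩ := hgloc (‖xs‖ + δs + 1) (by positivity)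
  refine ⟨max M₁ 0 * T + max M₂ 0, by positivity, ?_⟩
  intro t ht x hxS hx
  have hxb : ‖x‖ ≤ ‖xs‖ + δs + 1 := by
    calc ‖x‖ = ‖x - xs + xs‖ := by rw [sub_add_cancel]
    _ ≤ ‖x - xs‖ + ‖xs‖ := norm_add_le _ _
    _ ≤ ‖xs‖ + δs + 1 := by linarith
  have htT : t ≤ T := le_trans ht.2 hδT.le
  have hsub : Icc t T ⊆ Icc (0:ℝ) T := Icc_subset_Icc ht.1 le_rfl
  have hLbd : ∀ s ∈ Icc t T, L s x 0 ≤ ENNReal.ofReal (max M₁ 0) := by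
    intro s hs
    exact le_trans (hM₁ s (hsub hs) x 0 hxb (by simp; positivity)) (ENNReal.ofReal_le_ofReal (le_max_left _ _))
  have hJ : Jfun T L g t (fun _ => x) (fun _ => 0) ≤
      ENNReal.ofReal (max M₁ 0 * T + max M₂ 0) := by
    have h1 : (∫⁻ s in Icc t T, L s x 0) ≤ ENNReal.ofReal (max M₁ 0 * T) := by
      calc (∫⁻ s in Icc t T, L s x 0)
          ≤ ∫⁻ _ in Icc t T, ENNReal.ofReal (max M₁ 0) :=
            setLIntegral_mono measurable_const hLbd
        _ = ENNReal.ofReal (max M₁ 0) * volume (Icc t T) := by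
            simp [lintegral_const, mul_comm]
        _ ≤ ENNReal.ofReal (max M₁ 0) * ENNReal.ofReal T := by
            rw [Real.volume_Icc]
            exact mul_le_mul_right (ENNReal.ofReal_le_ofReal (by linarith [ht.1])) _
        _ = ENNReal.ofReal (max M₁ 0 * T) := by
            rw [ENNReal.ofReal_mul (le_max_right _ _)]
    have h2 : g x ≤ ENNReal.ofReal (max M₂ 0) :=
      le_trans (hM₂ x hxS hxb) (ENNReal.ofReal_le_ofReal (le_max_left _ _))
    calc Jfun T L g t (fun _ => x) (fun _ => 0)
        ≤ ENNReal.ofReal (max M₁ 0 * T) + ENNReal.ofReal (max M₂ 0) :=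
          add_le_add h1 h2
      _ = ENNReal.ofReal (max M₁ 0 * T + max M₂ 0) := by
          rw [ENNReal.ofReal_add (by positivity) (le_max_right _ _)]
  refine ⟨fun _ => x, fun _ => 0, ⟨measurable_const, ?_, ?_, ?_, ?_, ?_⟩, hJ⟩
  · filter_upwards with s _ using h0U
  · simp [integrableOn_const]
  · intro s hs; simp
  · intro s hs; exact hxS
  · exact ne_top_of_le_ne_top ENNReal.ofReal_ne_top hJ
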